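/- Suppose Y_s^{(h)} → Ỹ_s as h → 0⁺ for each s, and the family Y^{(h)}(x) = Σ_s Y_s^{(h)} x^{-[s]_h} is of type (C,λ) (i.e. ‖Y_s^{(h)}‖ ≤ Cλ^{[s-1]_h} for s ≥ 1, uniformly in small h). Then the power series Ỹ(x) = Σ_s Ỹ_s x^{-s} converges absolutely for |x| > λ+1, and for every x with Re(x) > λ+1 one has Y^{(h)}(x) → Ỹ(x) as h → 0⁺. -/

import Mathlib

open Filter Topology

set_option maxHeartbeats 1000000

lemma log_sum_aux (r : ℝ) (hr : 0 < r) (n : ℕ) :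
    Real.log (r + n) - Real.log r ≤ ∑ k ∈ Finset.range n, (r + k)⁻¹ := by
  induction n with
  | zero => simp
  | succ n ih =>
    rw [Finset.sum_range_succ]
    have h1 : (0:ℝ) < r + n := by positivity
    have h2 : Real.log (r + (n+1:ℕ)) - Real.log (r + n) ≤ (r + n)⁻¹ := by
      have h3 : (0:ℝ) < (r + (n+1:ℕ)) / (r + n) := by positivity
      have := Real.log_le_sub_one_of_pos h3
      rw [Real.log_div (by positivity) (by positivity)] at this
      have h4 : (r + (n+1:ℕ)) / (r + n) - 1 = (r+n)⁻¹ := by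
        push_cast; field_simp; ring
      linarith [h4 ▸ this]
    linarith

lemma prod_ratio_le (lam r : ℝ) (hlam : 0 ≤ lam) (hr : lam + 1 < r) (n : ℕ) :
    ∏ k ∈ Finset.range n, ((lam + k)/(r + k)) ≤ (r/(r+n)) ^ (r - lam) := by
  have hr0 : (0:ℝ) < r := by linarith
  have hstep : ∀ k ∈ Finset.range n, (lam + (k:ℝ))/(r + k) ≤ Real.exp (-((r - lam) * (r+k)⁻¹)) := by
    intro k _
    have hk : (0:ℝ) < r + k := by positivity
    have hid : (lam + (k:ℝ))/(r + k) = 1 - (r - lam) * (r+k)⁻¹ := by field_simp; ring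
    have := Real.add_one_le_exp (-((r - lam) * (r+k)⁻¹))
    rw [hid]; linarith
  calc ∏ k ∈ Finset.range n, ((lam + (k:ℝ))/(r + k))
      ≤ ∏ k ∈ Finset.range n, Real.exp (-((r - lam) * (r+k)⁻¹)) := by
        apply Finset.prod_le_prod
        · intro k _; positivity
        · exact hstep
    _ = Real.exp (∑ k ∈ Finset.range n, -((r - lam) * (r+k)⁻¹)) := (Real.exp_sum _ _).symm
    _ ≤ Real.exp ((r - lam) * (Real.log r - Real.log (r + n))) := by
        apply Real.exp_le_exp.mpr
        have := log_sum_aux r hr0 n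
        have hsum : ∑ k ∈ Finset.range n, -((r - lam) * (r+k)⁻¹)
            = -((r - lam) * ∑ k ∈ Finset.range n, (r+k)⁻¹) := by
          rw [Finset.mul_sum]; simp
        rw [hsum]
        nlinarith [this]
    _ = (r/(r+n)) ^ (r - lam) := by
        rw [Real.rpow_def_of_pos (by positivity), Real.log_div (by positivity) (by positivity)]
        ring_nf

lemma summable_prod_ratio (lam r : ℝ) (hlam : 0 ≤ lam) (hr : lam + 1 < r) :
    Summable (fun n : ℕ => ∏ k ∈ Finset.range n, ((lam + (k:ℝ))/(r + k))) := by
  have hr0 : (0:ℝ) < r := by linarith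
  have hp : 1 < r - lam := by linarith
  have hS : Summable (fun n : ℕ => r ^ (r - lam) * (((n:ℝ)+1) ^ (r - lam))⁻¹) := by
    apply Summable.mul_left
    have := (Real.summable_nat_rpow_inv (p := r - lam)).mpr hp
    have := (summable_nat_add_iff 1).mpr this
    convert this using 2 with n
    · rfl
    · push_cast; ring_nf
  apply Summable.of_nonneg_of_le (fun n => Finset.prod_nonneg (fun k _ => by positivity))
    (fun n => ?_) hS
  calc ∏ k ∈ Finset.range n, ((lam + (k:ℝ))/(r + k))
      ≤ (r/(r+n)) ^ (r - lam) := prod_ratio_le lam r hlam hr n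
    _ ≤ (r * ((n:ℝ)+1)⁻¹) ^ (r - lam) := by
        apply Real.rpow_le_rpow (by positivity) _ (by linarith)
        rw [div_eq_mul_inv]
        apply mul_le_mul_of_nonneg_left _ hr0.le
        apply inv_anti₀ (by positivity)
        linarith
    _ = r ^ (r - lam) * (((n:ℝ)+1) ^ (r - lam))⁻¹ := by
        rw [Real.mul_rpow hr0.le (by positivity), Real.inv_rpow (by positivity)]


/-- Confluence of type-`(C,λ)` `h`-factorial series to their limiting power series
at infinity: the limit series converges absolutely for `|x| > λ+1` and the
`h`-factorial sums converge pointwise for `Re x > λ+1` as `h → 0⁺`. -/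
theorem factorial_series_confluence
    {E : Type*} [NormedRing E] [NormedAlgebra ℂ E] [CompleteSpace E]
    (C lam h₀ : ℝ) (hC : 0 ≤ C) (hlam : 0 ≤ lam) (hh₀ : 0 < h₀)
    (Y : ℝ → ℕ → E) (Yt : ℕ → E)
    (hcoeff : ∀ s : ℕ, Tendsto (fun h : ℝ => Y h s)
      (nhdsWithin (0 : ℝ) (Set.Ioi 0)) (nhds (Yt s)))
    (htype : ∃ h₁ : ℝ, 0 < h₁ ∧ h₁ ≤ h₀ ∧ ∀ h : ℝ, 0 < h → h < h₁ → ∀ s : ℕ, 1 ≤ s →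
      ‖Y h s‖ ≤ C * ∏ k ∈ Finset.range (s - 1), (lam + (k : ℝ) * h)) :
    (∀ x : ℂ, lam + 1 < ‖x‖ →
        Summable (fun s : ℕ => ‖Yt s‖ * ‖x‖⁻¹ ^ s)) ∧
      ∀ x : ℂ, lam + 1 < x.re →
        Tendsto
          (fun h : ℝ => ∑' s : ℕ, (∏ k ∈ Finset.range s, (x + (k : ℂ) * (h : ℂ)))⁻¹ • Y h s)
          (nhdsWithin (0 : ℝ) (Set.Ioi 0))
          (nhds (∑' s : ℕ, ((x : ℂ) ^ s)⁻¹ • Yt s)) := by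
  obtain ⟨h₁, h₁pos, h₁le, hb⟩ := htype
  -- limit coefficient bound
  have hYt : ∀ s : ℕ, ‖Yt (s+1)‖ ≤ C * lam ^ s := by
    intro s
    have hg : Tendsto (fun h : ℝ => C * ∏ k ∈ Finset.range s, (lam + (k:ℝ) * h))
        (nhdsWithin (0:ℝ) (Set.Ioi 0)) (nhds (C * lam ^ s)) := by
      have hc : Continuous fun h : ℝ => C * ∏ k ∈ Finset.range s, (lam + (k:ℝ) * h) := by
        continuity
      have h2 : Tendsto (fun h : ℝ => C * ∏ k ∈ Finset.range s, (lam + (k:ℝ) * h))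
          (nhds (0:ℝ)) (nhds (C * lam ^ s)) := by
        simpa [Finset.prod_const] using hc.tendsto 0
      exact h2.mono_left nhdsWithin_le_nhds
    refine le_of_tendsto_of_tendsto (hcoeff (s+1)).norm hg ?_
    filter_upwards [Ioo_mem_nhdsGT_of_mem (show (0:ℝ) ∈ Set.Ico 0 h₁ from ⟨le_refl 0, h₁pos⟩)]
      with h hmem
    simpa using hb h hmem.1 hmem.2 (s+1) (by omega)
  constructor
  · intro x hx
    set a := ‖x‖ with ha
    have ha1 : (1:ℝ) < a := by linarith
    have ha0 : (0:ℝ) < a := by linarith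
    have hq : lam * a⁻¹ < 1 := by
      rw [← div_eq_mul_inv, div_lt_one ha0]; linarith
    rw [← summable_nat_add_iff 1]
    have hgeo : Summable (fun s : ℕ => (C * a⁻¹) * (lam * a⁻¹) ^ s) :=
      (summable_geometric_of_lt_one (by positivity) hq).mul_left _
    refine Summable.of_nonneg_of_le (fun s => by positivity) (fun s => ?_) hgeo
    calc ‖Yt (s+1)‖ * a⁻¹ ^ (s+1) ≤ (C * lam ^ s) * a⁻¹ ^ (s+1) := by
          apply mul_le_mul_of_nonneg_right (hYt s) (by positivity)
      _ = (C * a⁻¹) * (lam * a⁻¹) ^ s := by rw [mul_pow, pow_succ]; ring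
  · intro x hx
    set r := x.re with hrdef
    have hr1 : (1:ℝ) < r := by linarith
    have hr0 : (0:ℝ) < r := by linarith
    have hxne : x ≠ 0 := by
      intro h; rw [hrdef, h] at hx; simp at hx; linarith
    set bound : ℕ → ℝ := fun s =>
      if s = 0 then ‖Yt 0‖ + 1 else C / r * ∏ k ∈ Finset.range (s-1), ((lam + (k:ℝ))/(r + k))
      with hbound
    have hsum : Summable bound := by
      rw [← summable_nat_add_iff 1]
      simp only [hbound, Nat.add_sub_cancel, Nat.succ_ne_zero, if_false]
      exact (summable_prod_ratio lam r hlam hx).mul_left _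
    apply tendsto_tsum_of_dominated_convergence hsum
    · intro s
      have hprod : Tendsto (fun h : ℝ => ∏ k ∈ Finset.range s, (x + (k:ℂ) * (h:ℂ)))
          (nhdsWithin (0:ℝ) (Set.Ioi 0)) (nhds (x ^ s)) := by
        have hc : Continuous fun h : ℝ => ∏ k ∈ Finset.range s, (x + (k:ℂ) * (h:ℂ)) := by
          continuity
        have h2 : Tendsto (fun h : ℝ => ∏ k ∈ Finset.range s, (x + (k:ℂ) * (h:ℂ)))
            (nhds (0:ℝ)) (nhds (x ^ s)) := by
          simpa [Finset.prod_const] using hc.tendsto 0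
        exact h2.mono_left nhdsWithin_le_nhds
      exact (hprod.inv₀ (pow_ne_zero s hxne)).smul (hcoeff s)
    · have h0 : ∀ᶠ h in nhdsWithin (0:ℝ) (Set.Ioi 0), ‖Y h 0‖ ≤ ‖Yt 0‖ + 1 := by
        filter_upwards [(hcoeff 0).norm.eventually_lt_const (show ‖Yt 0‖ < ‖Yt 0‖ + 1 by linarith)]
          with h hh using hh.le
      filter_upwards [h0, Ioo_mem_nhdsGT_of_mem
        (show (0:ℝ) ∈ Set.Ico 0 (min h₁ 1) from ⟨le_refl 0, by positivity⟩)] with h hY0 hmem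
      intro s
      have hhp : 0 < h := hmem.1
      have hh1 : h < h₁ := lt_of_lt_of_le hmem.2 (min_le_left _ _)
      have hhle1 : h ≤ 1 := (lt_of_lt_of_le hmem.2 (min_le_right _ _)).le
      match s with
      | 0 => simpa [hbound] using hY0
      | (m+1) =>
        have habs : ∀ k : ℕ, r + (k:ℝ) * h ≤ ‖x + (k:ℂ) * (h:ℂ)‖ := by
          intro k
          have : (x + (k:ℂ) * (h:ℂ)).re = r + (k:ℝ) * h := by
            simp [Complex.add_re, Complex.mul_re, hrdef]
          rw [← this]
          exact Complex.re_le_norm _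
        have hP : (0:ℝ) < ∏ k ∈ Finset.range (m+1), (r + (k:ℝ) * h) :=
          Finset.prod_pos (fun k _ => by positivity)
        have step1 : ‖(∏ k ∈ Finset.range (m+1), (x + (k:ℂ) * (h:ℂ)))⁻¹‖
            ≤ (∏ k ∈ Finset.range (m+1), (r + (k:ℝ) * h))⁻¹ := by
          rw [norm_inv, norm_prod]
          apply inv_anti₀ hP
          exact Finset.prod_le_prod (fun k _ => by positivity) (fun k _ => habs k)
        have step2 : ‖Y h (m+1)‖ ≤ C * ∏ k ∈ Finset.range m, (lam + (k:ℝ) * h) := by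
          simpa using hb h hhp hh1 (m+1) (by omega)
        have key : ∏ k ∈ Finset.range m, ((lam + (k:ℝ)*h)/(r + ((k:ℝ)+1)*h))
            ≤ ∏ k ∈ Finset.range m, ((lam + (k:ℝ))/(r + k)) := by
          apply Finset.prod_le_prod (fun k _ => by positivity)
          intro k _
          rw [div_le_div_iff₀ (by positivity) (by positivity)]
          have hk : (0:ℝ) ≤ (k:ℝ) := k.cast_nonneg
          have key1 : (1:ℝ) ≤ h*(lam+1-r) + (r-lam) := by
            nlinarith [mul_nonneg (sub_nonneg.mpr hhle1) (show (0:ℝ) ≤ r-lam-1 by linarith)]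
          have e : (lam + (k:ℝ))*(r+((k:ℝ)+1)*h) - (lam + (k:ℝ)*h)*(r+(k:ℝ))
              = lam*h + (k:ℝ)*(h*(lam+1-r)+(r-lam)) := by ring
          nlinarith [mul_nonneg hk (show (0:ℝ) ≤ h*(lam+1-r)+(r-lam) by linarith),
            mul_nonneg hlam hhp.le]
        have hsplit : ∏ k ∈ Finset.range (m+1), (r + (k:ℝ) * h)
            = (∏ k ∈ Finset.range m, (r + ((k:ℝ)+1)*h)) * r := by
          rw [Finset.prod_range_succ']
          push_cast
          simp
        have hPm : (0:ℝ) < ∏ k ∈ Finset.range m, (r + ((k:ℝ)+1)*h) :=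
          Finset.prod_pos (fun k _ => by positivity)
        have step3 : (∏ k ∈ Finset.range (m+1), (r + (k:ℝ) * h))⁻¹
              * (C * ∏ k ∈ Finset.range m, (lam + (k:ℝ) * h))
            ≤ C / r * ∏ k ∈ Finset.range m, ((lam + (k:ℝ))/(r + k)) := by
          rw [hsplit]
          have hqd : (∏ k ∈ Finset.range m, (lam + (k:ℝ)*h))
              / (∏ k ∈ Finset.range m, (r + ((k:ℝ)+1)*h))
              = ∏ k ∈ Finset.range m, ((lam + (k:ℝ)*h)/(r + ((k:ℝ)+1)*h)) :=
            (Finset.prod_div_distrib _ _).symm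
          have hQ : (0:ℝ) ≤ ∏ k ∈ Finset.range m, (lam + (k:ℝ)*h) :=
            Finset.prod_nonneg (fun k _ => by positivity)
          calc ((∏ k ∈ Finset.range m, (r + ((k:ℝ)+1)*h)) * r)⁻¹
                * (C * ∏ k ∈ Finset.range m, (lam + (k:ℝ) * h))
              = C / r * ((∏ k ∈ Finset.range m, (lam + (k:ℝ)*h))
                / (∏ k ∈ Finset.range m, (r + ((k:ℝ)+1)*h))) := by
                rw [mul_inv, div_eq_mul_inv, div_eq_mul_inv]
                ring
            _ = C / r * ∏ k ∈ Finset.range m, ((lam + (k:ℝ)*h)/(r + ((k:ℝ)+1)*h)) := by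
                rw [hqd]
            _ ≤ C / r * ∏ k ∈ Finset.range m, ((lam + (k:ℝ))/(r + k)) := by
                apply mul_le_mul_of_nonneg_left key (by positivity)
        calc ‖(∏ k ∈ Finset.range (m+1), (x + (k:ℂ) * (h:ℂ)))⁻¹ • Y h (m+1)‖
            = ‖(∏ k ∈ Finset.range (m+1), (x + (k:ℂ) * (h:ℂ)))⁻¹‖ * ‖Y h (m+1)‖ :=
              norm_smul _ _
          _ ≤ (∏ k ∈ Finset.range (m+1), (r + (k:ℝ) * h))⁻¹
              * (C * ∏ k ∈ Finset.range m, (lam + (k:ℝ) * h)) := by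
              apply mul_le_mul step1 step2 (norm_nonneg _) (by positivity)
          _ ≤ C / r * ∏ k ∈ Finset.range m, ((lam + (k:ℝ))/(r + k)) := step3
          _ = bound (m+1) := by simp [hbound]
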